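/- In the group algebra Q[S_n] of the symmetric group, the product Π_{j=2}^{n} Π_{i=1}^{j-1} (1 + (1/(j-i))·e_{(i j)}), taken in this order, equals Σ_{g ∈ S_n} e_g, the sum of all group elements. -/

import Mathlib

open Finset

namespace ProdTranspositionAux

variable {n : ℕ}

noncomputable def ofp {n : ℕ} (g : Equiv.Perm (Fin n)) :
    MonoidAlgebra ℚ (Equiv.Perm (Fin n)) :=
  MonoidAlgebra.of ℚ (Equiv.Perm (Fin n)) g

def D (n k : ℕ) : Finset (Equiv.Perm (Fin n)) :=
  Finset.univ.filter fun g => ∀ m : Fin n, k ≤ m.val → g m = m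

noncomputable def T (n k : ℕ) : MonoidAlgebra ℚ (Equiv.Perm (Fin n)) :=
  ∑ g ∈ D n k, ofp g

lemma mem_D {k : ℕ} {g : Equiv.Perm (Fin n)} :
    g ∈ D n k ↔ ∀ m : Fin n, k ≤ m.val → g m = m := by
  simp [D]

lemma mul_mem_D {k : ℕ} {g h : Equiv.Perm (Fin n)} (hg : g ∈ D n k) (hh : h ∈ D n k) :
    g * h ∈ D n k := by
  rw [mem_D] at *
  intro m hm
  simp [Equiv.Perm.mul_apply, hh m hm, hg m hm]

lemma inv_mem_D {k : ℕ} {g : Equiv.Perm (Fin n)} (hg : g ∈ D n k) : g⁻¹ ∈ D n k := by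
  rw [mem_D] at *
  intro m hm
  conv_lhs => rw [← hg m hm]
  simp

lemma swap_mem_D {k : ℕ} {i j : Fin n} (hi : i.val < k) (hj : j.val < k) :
    Equiv.swap i j ∈ D n k := by
  rw [mem_D]; intro m hm
  apply Equiv.swap_apply_of_ne_of_ne
  · exact fun h => by subst h; omega
  · exact fun h => by subst h; omega

lemma ofp_mul (g h : Equiv.Perm (Fin n)) : ofp (g * h) = ofp g * ofp h := map_mul _ _ _

lemma T_absorb {k : ℕ} {h : Equiv.Perm (Fin n)} (hh : h ∈ D n k) :
    T n k * ofp h = T n k := by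
  rw [T, Finset.sum_mul]
  simp_rw [← ofp_mul]
  exact Finset.sum_nbij' (fun g => g * h) (fun g => g * h⁻¹)
    (fun a ha => mul_mem_D ha hh)
    (fun a ha => mul_mem_D ha (inv_mem_D hh))
    (fun a _ => by group)
    (fun a _ => by group)
    (fun a _ => rfl)

lemma swap_swap_eq {i K j : Fin n} (h1 : K ≠ i) (h2 : K ≠ j) :
    Equiv.swap i j * Equiv.swap K j = Equiv.swap i K * Equiv.swap i j := by
  have h := Equiv.swap_apply_apply (Equiv.swap i j) K j
  rw [Equiv.swap_apply_of_ne_of_ne h1 h2, Equiv.swap_apply_right] at h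
  rw [Equiv.swap_comm i K, h, inv_mul_cancel_right]

lemma range_filter_lt (n m : ℕ) :
    (List.range n).filter (fun v => v < m) = List.range (min m n) := by
  induction n with
  | zero => simp
  | succ n ih =>
    rw [List.range_succ, List.filter_append, ih]
    by_cases h : n < m
    · rw [min_eq_right (by omega), min_eq_right (by omega), List.range_succ]
      simp [h]
    · rw [min_eq_left (by omega), min_eq_left (by omega)]
      simp [h]

lemma filter_finRange_succ {n : ℕ} (k : ℕ) (hk : k < n) :
    ((List.finRange n).filter fun i => i.val < k + 1)
      = (((List.finRange n).filter fun i => i.val < k) ++ [(⟨k, hk⟩ : Fin n)]) := by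
  apply List.map_injective_iff.mpr Fin.val_injective
  have h1 : ∀ m : ℕ, (List.map Fin.val ((List.finRange n).filter fun i => i.val < m))
      = List.range (min m n) := by
    intro m
    rw [show (fun i : Fin n => decide (i.val < m)) = (fun v => decide (v < m)) ∘ Fin.val from rfl,
      ← List.filter_map,
      (show (List.finRange n).map Fin.val = List.range n from
        List.ext_getElem (by simp) (fun i h1 h2 => by simp)), range_filter_lt]
  rw [List.map_append, h1, h1]
  simp only [List.map_cons, List.map_nil]
  rw [min_eq_left (by omega), min_eq_left (by omega), List.range_succ]

lemma D_succ (j : Fin n) :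
    D n (j.val + 1) = (Finset.univ.filter fun i : Fin n => i.val ≤ j.val).biUnion
      (fun i => (D n j.val).image (fun g => g * Equiv.swap i j)) := by
  ext h
  simp only [Finset.mem_biUnion, Finset.mem_image, Finset.mem_filter, Finset.mem_univ, true_and]
  constructor
  · intro hh
    rw [mem_D] at hh
    refine ⟨h⁻¹ j, ?_, h * Equiv.swap (h⁻¹ j) j, ?_, ?_⟩
    · by_contra hc
      push_neg at hc
      have h1 := hh (h⁻¹ j) hc
      rw [show h (h⁻¹ j) = j from h.apply_symm_apply j] at h1
      rw [← h1] at hc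
      omega
    · rw [mem_D]; intro m hm
      rcases eq_or_lt_of_le hm with heq | hlt
      · have hmj : m = j := Fin.ext heq.symm
        subst hmj
        simp [Equiv.Perm.mul_apply, Equiv.swap_apply_right]
      · have h2 : m ≠ j := fun he => by subst he; omega
        have h1 : m ≠ h⁻¹ j := by
          intro he
          have h3 := hh m hlt
          rw [he, show h (h⁻¹ j) = j from h.apply_symm_apply j] at h3
          exact h2 (he.trans h3.symm)
        rw [Equiv.Perm.mul_apply, Equiv.swap_apply_of_ne_of_ne h1 h2, hh m hlt]
    · rw [mul_assoc, Equiv.swap_mul_self, mul_one]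
  · rintro ⟨i, hi, g, hg, rfl⟩
    rw [mem_D] at *
    intro m hm
    have h1 : m ≠ i := fun he => by subst he; omega
    have h2 : m ≠ j := fun he => by subst he; omega
    simp [Equiv.Perm.mul_apply, Equiv.swap_apply_of_ne_of_ne h1 h2, hg m (by omega)]

lemma j_fixed {j : Fin n} {g : Equiv.Perm (Fin n)} (hg : g ∈ D n j.val) : g j = j :=
  mem_D.mp hg j le_rfl

lemma T_succ (j : Fin n) :
    T n (j.val + 1) = T n j.val + ∑ i ∈ Finset.univ.filter (fun i : Fin n => i.val < j.val),
      T n j.val * ofp (Equiv.swap i j) := by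
  have hdisj : (↑(Finset.univ.filter fun i : Fin n => i.val ≤ j.val) :
      Set (Fin n)).PairwiseDisjoint
      (fun i => (D n j.val).image (fun g => g * Equiv.swap i j)) := by
    intro i1 _ i2 _ hne
    refine Finset.disjoint_left.mpr ?_
    intro h h1 h2
    obtain ⟨g1, hg1, rfl⟩ := Finset.mem_image.mp h1
    obtain ⟨g2, hg2, heq⟩ := Finset.mem_image.mp h2
    apply hne
    have e1 : (g1 * Equiv.swap i1 j) i1 = j := by
      simp [Equiv.Perm.mul_apply, Equiv.swap_apply_left, j_fixed hg1]
    have e2 : (g1 * Equiv.swap i1 j) i2 = j := by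
      rw [← heq]
      simp [Equiv.Perm.mul_apply, Equiv.swap_apply_left, j_fixed hg2]
    exact (g1 * Equiv.swap i1 j).injective (e1.trans e2.symm)
  rw [T, D_succ j, Finset.sum_biUnion hdisj]
  have himg : ∀ i : Fin n,
      ∑ h ∈ (D n j.val).image (fun g => g * Equiv.swap i j), ofp h
        = T n j.val * ofp (Equiv.swap i j) := by
    intro i
    rw [Finset.sum_image (fun x _ y _ h => mul_right_cancel h), T, Finset.sum_mul]
    simp_rw [ofp_mul]
  simp_rw [himg]
  have hsplit : (Finset.univ.filter fun i : Fin n => i.val ≤ j.val)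
      = insert j (Finset.univ.filter fun i : Fin n => i.val < j.val) := by
    ext m
    simp only [Finset.mem_insert, Finset.mem_filter, Finset.mem_univ, true_and, Fin.ext_iff]
    omega
  rw [hsplit, Finset.sum_insert (by simp)]
  congr 1
  have h1 : Equiv.swap j j = 1 := Equiv.swap_self j
  rw [h1]
  have h2 : ofp (1 : Equiv.Perm (Fin n)) = 1 := map_one (MonoidAlgebra.of ℚ (Equiv.Perm (Fin n)))
  rw [h2, mul_one]

lemma coeff_eq {x y : ℚ} (h : y < x) :
    (x - y + 1)⁻¹ + (x - y + 1)⁻¹ * (x - y)⁻¹ = (x - y)⁻¹ := by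
  have h1 : x - y ≠ 0 := by intro h0; rw [sub_eq_zero] at h0; exact absurd h0.symm (ne_of_lt h)
  have h2 : x - y + 1 ≠ 0 := by
    have : (0:ℚ) < x - y := by linarith
    positivity
  field_simp

lemma inner_lemma (j : Fin n) (k : ℕ) (hk : k ≤ j.val) :
    T n j.val * (((List.finRange n).filter fun i => i.val < k).map fun i =>
        (1 + ((j.val : ℚ) - (i.val : ℚ))⁻¹ • ofp (Equiv.swap i j))).prod
      = T n j.val + ((j.val : ℚ) - (k : ℚ) + 1)⁻¹ •
          ∑ i ∈ Finset.univ.filter fun i : Fin n => i.val < k,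
            T n j.val * ofp (Equiv.swap i j) := by
  induction k with
  | zero =>
    have h0 : ((List.finRange n).filter fun i => i.val < 0) = [] := by
      simp
    have h1 : (Finset.univ.filter fun i : Fin n => i.val < 0) = ∅ := by
      ext m; simp
    rw [h0, h1]
    simp
  | succ k ih =>
    have hkj : k < j.val := hk
    have hkn : k < n := lt_trans hkj j.isLt
    have hjk : (k : ℚ) < (j.val : ℚ) := by exact_mod_cast hkj
    set K : Fin n := ⟨k, hkn⟩ with hK
    rw [filter_finRange_succ k hkn, List.map_append, List.prod_append]
    simp only [List.map_cons, List.map_nil, List.prod_cons, List.prod_nil, mul_one]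
    rw [← mul_assoc, ih (le_of_lt hkj)]
    have hKv : ((K.val : ℚ) : ℚ) = (k : ℚ) := rfl
    rw [hKv]
    set c : ℚ := ((j.val : ℚ) - (k : ℚ) + 1)⁻¹ with hc
    set b : ℚ := ((j.val : ℚ) - (k : ℚ))⁻¹ with hb
    set S := ∑ i ∈ Finset.univ.filter fun i : Fin n => i.val < k,
      T n j.val * ofp (Equiv.swap i j) with hSdef
    set W := ofp (Equiv.swap K j) with hW
    -- key absorption
    have hkey : ∀ i ∈ Finset.univ.filter fun i : Fin n => i.val < k,
        T n j.val * ofp (Equiv.swap i j) * W = T n j.val * ofp (Equiv.swap i j) := by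
      intro i hi
      simp only [Finset.mem_filter, Finset.mem_univ, true_and] at hi
      have hKval : (K : Fin n).val = k := rfl
      have hik : K ≠ i := by
        intro he; have h' := congrArg Fin.val he; rw [hKval] at h'; omega
      have hKj : K ≠ j := by
        intro he; have h' := congrArg Fin.val he; rw [hKval] at h'; omega
      rw [hW, mul_assoc, ← ofp_mul, swap_swap_eq hik hKj, ofp_mul, ← mul_assoc,
        T_absorb (swap_mem_D (show i.val < j.val by omega)
          (show K.val < j.val by rw [hKval]; omega))]
    have hS : S * W = S := by
      rw [hSdef, Finset.sum_mul]
      exact Finset.sum_congr rfl hkey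
    -- RHS reshaping
    have hins : (Finset.univ.filter fun i : Fin n => i.val < k + 1)
        = insert K (Finset.univ.filter fun i : Fin n => i.val < k) := by
      ext m
      have hKval : (K : Fin n).val = k := rfl
      simp only [Finset.mem_insert, Finset.mem_filter, Finset.mem_univ, true_and, Fin.ext_iff,
        hKval]
      omega
    have hKnotmem : K ∉ (Finset.univ.filter fun i : Fin n => i.val < k) := by
      have hKval : (K : Fin n).val = k := rfl
      simp only [Finset.mem_filter, Finset.mem_univ, true_and, hKval]
      omega
    have hco : ((j.val : ℚ) - ((k + 1 : ℕ) : ℚ) + 1)⁻¹ = b := by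
      rw [hb]
      push_cast
      ring_nf
    rw [hins, Finset.sum_insert hKnotmem, hco, ← hSdef, ← hW]
    have hcb : c + c * b = b := by rw [hc, hb]; exact coeff_eq hjk
    calc (T n j.val + c • S) * (1 + b • W)
        = T n j.val + (b • (T n j.val * W) + (c • S + (c * b) • (S * W))) := by
          rw [mul_add, mul_one, add_mul, mul_smul_comm, smul_mul_assoc, mul_smul_comm, smul_smul]
          abel
      _ = T n j.val + (b • (T n j.val * W) + b • S) := by rw [hS, ← add_smul, hcb]
      _ = T n j.val + b • (T n j.val * W + S) := by rw [smul_add]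

lemma outer_lemma (k : ℕ) (hk : k ≤ n) :
    (((List.finRange n).filter fun j => j.val < k).map fun j =>
        (((List.finRange n).filter fun i => i < j).map fun i =>
          (1 + ((j.val : ℚ) - (i.val : ℚ))⁻¹ • ofp (Equiv.swap i j))).prod).prod = T n k := by
  induction k with
  | zero =>
    have h0 : ((List.finRange n).filter fun j => j.val < 0) = [] := by simp
    rw [h0]
    have hD : D n 0 = {1} := by
      ext g
      simp only [mem_D, Finset.mem_singleton]
      constructor
      · intro h; exact Equiv.ext fun m => h m (Nat.zero_le _)
      · intro h m _; rw [h]; rfl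
    rw [T, hD, Finset.sum_singleton]
    have : ofp (1 : Equiv.Perm (Fin n)) = 1 :=
      map_one (MonoidAlgebra.of ℚ (Equiv.Perm (Fin n)))
    rw [this, List.map_nil, List.prod_nil]
  | succ k ih =>
    have hkn : k < n := hk
    rw [filter_finRange_succ k hkn, List.map_append, List.prod_append]
    simp only [List.map_cons, List.map_nil, List.prod_cons, List.prod_nil, mul_one]
    rw [ih (le_of_lt hkn)]
    set j : Fin n := ⟨k, hkn⟩ with hj
    have hfc : ((List.finRange n).filter fun i => i < j)
        = ((List.finRange n).filter fun i => i.val < j.val) := by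
      apply List.filter_congr
      intro a _
      exact decide_eq_decide.mpr Fin.lt_def
    rw [hfc]
    show T n j.val * _ = T n (j.val + 1)
    rw [inner_lemma j j.val le_rfl]
    have h1 : ((j.val : ℚ) - (j.val : ℚ) + 1)⁻¹ = 1 := by norm_num
    rw [h1, one_smul]
    exact (T_succ j).symm

end ProdTranspositionAux

/-- In the group algebra `ℚ[S_n]`, the ordered product
`Π_{j=2}^{n} Π_{i=1}^{j-1} (1 + (1/(j-i))·e_{(i j)})` (outer index `j`
ascending, inner index `i` ascending) equals `Σ_{g ∈ S_n} e_g`. -/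
theorem product_of_transposition_factors (n : ℕ) :
    (((List.finRange n).flatMap fun j =>
        ((List.finRange n).filter fun i => i < j).map fun i =>
          (1 + ((j.val : ℚ) - (i.val : ℚ))⁻¹ •
            (MonoidAlgebra.of ℚ (Equiv.Perm (Fin n)) (Equiv.swap i j)) :
            MonoidAlgebra ℚ (Equiv.Perm (Fin n))))).prod
      = ∑ g : Equiv.Perm (Fin n), MonoidAlgebra.of ℚ (Equiv.Perm (Fin n)) g := by
  have h := ProdTranspositionAux.outer_lemma (n := n) n le_rfl
  have hfull : ((List.finRange n).filter fun j => j.val < n) = List.finRange n :=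
    List.filter_eq_self.mpr (fun a _ => by simp [a.isLt])
  rw [hfull] at h
  have hT : ProdTranspositionAux.T n n
      = ∑ g : Equiv.Perm (Fin n), MonoidAlgebra.of ℚ (Equiv.Perm (Fin n)) g := by
    rw [ProdTranspositionAux.T]
    have hD : ProdTranspositionAux.D n n = Finset.univ := by
      ext g
      simp only [ProdTranspositionAux.mem_D, Finset.mem_univ, iff_true]
      intro m hm
      exact absurd hm (Nat.not_le.mpr m.isLt)
    rw [hD]
    exact Finset.sum_congr rfl (fun g _ => rfl)
  rw [hT] at h
  rw [← h, List.flatMap_def, List.prod_flatten, List.map_map]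
  rfl
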